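/- Let G be a finite tree with at least 2 vertices in which every core has size at most c (c ≥ 1). Then there exists a star packing of G, i.e., a multiset of star subgraphs of G with positive integer multiplicities, such that every edge of G is covered exactly c times and every vertex of G is covered at most 2c−1 times. -/

import Mathlib

open scoped Classical

/-- A tree core: `X` induces a connected subgraph and every vertex of `X` has a
neighbor outside `X`. -/
def IsTreeCore {V : Type*} (G : SimpleGraph V) (X : Finset V) : Prop :=
  (G.induce (X : Set V)).Connected ∧ ∀ x ∈ X, ∃ y, y ∉ X ∧ G.Adj x y

/-- A star subgraph of `G`: a center vertex with a nonempty set of neighbors. -/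
structure GraphStar {V : Type*} (G : SimpleGraph V) where
  center : V
  leaves : Finset V
  nonempty : leaves.Nonempty
  adj : ∀ u ∈ leaves, G.Adj center u

/-- The star contains the vertex `v`. -/
def GraphStar.memV {V : Type*} {G : SimpleGraph V} (S : GraphStar G) (v : V) : Prop :=
  v = S.center ∨ v ∈ S.leaves

/-- The star contains the edge `uv`. -/
def GraphStar.memE {V : Type*} {G : SimpleGraph V} (S : GraphStar G) (u v : V) : Prop :=
  (u = S.center ∧ v ∈ S.leaves) ∨ (v = S.center ∧ u ∈ S.leaves)

set_option linter.unusedSectionVars false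
namespace StarPackAux

open SimpleGraph Finset

variable {V : Type*} [Fintype V] {G : SimpleGraph V} {r : V}

lemma path_unique (hG : G.IsTree) {u v : V} {p q : G.Walk u v} (hp : p.IsPath) (hq : q.IsPath) :
    p = q := by
  obtain ⟨w, -, hu⟩ := hG.existsUnique_path u v
  rw [hu p hp, hu q hq]

lemma dist_lt_card (hG : G.Connected) (v u : V) : G.dist v u < Fintype.card V := by
  obtain ⟨p, hp, hl⟩ := hG.exists_path_of_dist v u
  rw [← hl]; exact hp.length_lt

lemma concat_isPath {u v w : V} {p : G.Walk u v} (h : G.Adj v w) (hp : p.IsPath)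
    (hw : w ∉ p.support) : (p.concat h).IsPath := by
  rw [← SimpleGraph.Walk.isPath_reverse_iff, SimpleGraph.Walk.reverse_concat]
  exact (hp.reverse).cons (by simpa using hw)

lemma mem_support_dist_le {u v x : V} {p : G.Walk u v} (hx : x ∈ p.support) :
    G.dist u x ≤ p.length :=
  le_trans (SimpleGraph.dist_le (p.takeUntil x hx)) (SimpleGraph.Walk.length_takeUntil_le p hx)

lemma adj_dist_ne (hG : G.IsTree) {u v : V} (h : G.Adj u v) : G.dist r u ≠ G.dist r v := by
  intro he
  obtain ⟨p, hp, hl⟩ := hG.isConnected.exists_path_of_dist r u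
  by_cases hv : v ∈ p.support
  · -- dropUntil is path from v to u of positive length; must equal single edge
    have h1 : (p.dropUntil v hv).IsPath := hp.dropUntil hv
    have h2 : (SimpleGraph.Walk.cons h.symm SimpleGraph.Walk.nil : G.Walk v u).IsPath := by
      simp [SimpleGraph.Walk.isPath_def, h.ne']
    have he2 := path_unique hG h1 h2
    have h3 := SimpleGraph.Walk.length_takeUntil_le p hv
    have h4 : (p.takeUntil v hv).length + (p.dropUntil v hv).length = p.length := by
      conv_rhs => rw [← p.take_spec hv]
      rw [SimpleGraph.Walk.length_append]
    have h5 : G.dist r v ≤ (p.takeUntil v hv).length := SimpleGraph.dist_le _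
    rw [he2] at h4
    simp at h4
    omega
  · have h6 : (p.concat h).IsPath := concat_isPath h hp hv
    obtain ⟨q, hq, hql⟩ := hG.isConnected.exists_path_of_dist r v
    have := path_unique hG h6 hq
    have : (p.concat h).length = q.length := by rw [this]
    rw [SimpleGraph.Walk.length_concat] at this
    omega

lemma adj_dist (hG : G.IsTree) {u v : V} (h : G.Adj u v) :
    G.dist r v = G.dist r u + 1 ∨ G.dist r u = G.dist r v + 1 := by
  have h1 : G.dist r v ≤ G.dist r u + 1 := by
    have := hG.isConnected.dist_triangle (u := r) (v := u) (w := v)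
    have hd : G.dist u v = 1 := by rwa [SimpleGraph.dist_eq_one_iff_adj]
    omega
  have h2 : G.dist r u ≤ G.dist r v + 1 := by
    have := hG.isConnected.dist_triangle (u := r) (v := v) (w := u)
    have hd : G.dist v u = 1 := by rwa [SimpleGraph.dist_eq_one_iff_adj, adj_comm]
    omega
  have := adj_dist_ne (r := r) hG h
  omega



lemma exists_parent (hG : G.IsTree) {v : V} (hv : v ≠ r) :
    ∃ u, G.Adj v u ∧ G.dist r u + 1 = G.dist r v := by
  have hd : 0 < G.dist r v := hG.isConnected.pos_dist_of_ne (Ne.symm hv)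
  obtain ⟨p, hp, hl⟩ := hG.isConnected.exists_path_of_dist r v
  have hlen : 0 < p.reverse.length := by simp [hl, hd]
  have hadj : G.Adj v (p.reverse.getVert 1) := by
    have := p.reverse.adj_getVert_succ (i := 0) hlen
    simpa using this
  set u := p.reverse.getVert 1 with hu
  have hmem : u ∈ p.support := by
    have : u ∈ p.reverse.support := by
      rw [SimpleGraph.Walk.mem_support_iff_exists_getVert]
      exact ⟨1, rfl, by omega⟩
    simpa [SimpleGraph.Walk.support_reverse] using this
  have hle : G.dist r u ≤ p.length := mem_support_dist_le hmem
  rcases adj_dist (r := r) hG hadj with h | h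
  · omega
  · exact ⟨u, hadj, h.symm⟩

lemma parent_unique (hG : G.IsTree) {v u₁ u₂ : V} (h₁ : G.Adj v u₁) (h₂ : G.Adj v u₂)
    (hd₁ : G.dist r u₁ + 1 = G.dist r v) (hd₂ : G.dist r u₂ + 1 = G.dist r v) : u₁ = u₂ := by
  obtain ⟨p₁, hp₁, hl₁⟩ := hG.isConnected.exists_path_of_dist r u₁
  obtain ⟨p₂, hp₂, hl₂⟩ := hG.isConnected.exists_path_of_dist r u₂
  have hns₁ : v ∉ p₁.support := fun hmem => by have := mem_support_dist_le hmem; omega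
  have hns₂ : v ∉ p₂.support := fun hmem => by have := mem_support_dist_le hmem; omega
  have hq₁ : (p₁.concat h₁.symm).IsPath := concat_isPath h₁.symm hp₁ hns₁
  have hq₂ : (p₂.concat h₂.symm).IsPath := concat_isPath h₂.symm hp₂ hns₂
  have heq := path_unique hG hq₁ hq₂
  have heq2 := congrArg SimpleGraph.Walk.reverse heq
  rw [SimpleGraph.Walk.reverse_concat, SimpleGraph.Walk.reverse_concat] at heq2
  have := congrArg (fun q : G.Walk v r => q.getVert 1) heq2
  simpa [SimpleGraph.Walk.getVert_cons_succ] using this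

/-- The children of `v` in the tree rooted at `r`. -/
noncomputable def children (G : SimpleGraph V) (r v : V) : Finset V :=
  (G.neighborFinset v).filter fun u => G.dist r u = G.dist r v + 1

lemma mem_children {v u : V} : u ∈ children G r v ↔ G.Adj v u ∧ G.dist r u = G.dist r v + 1 := by
  simp [children, mem_filter, SimpleGraph.mem_neighborFinset]

/-- `u` lies (weakly) below `v` in the tree rooted at `r`. -/
def Below (G : SimpleGraph V) (r v u : V) : Prop :=
  G.dist r u = G.dist r v + G.dist v u

lemma below_self (v : V) : Below G r v v := by simp [Below, SimpleGraph.dist_self]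

lemma below_dist_le {v u : V} (h : Below G r v u) : G.dist r v ≤ G.dist r u := by
  rw [h]; omega

lemma below_child (hG : G.IsTree) {v w : V} (hw : w ∈ children G r v) : Below G r v w := by
  rw [mem_children] at hw
  have : G.dist v w = 1 := SimpleGraph.dist_eq_one_iff_adj.mpr hw.1
  rw [Below, this, hw.2]

lemma below_trans (hG : G.Connected) {v x y : V} (h₁ : Below G r v x) (h₂ : Below G r x y) :
    Below G r v y := by
  have t₁ : G.dist r y ≤ G.dist r v + G.dist v y := hG.dist_triangle
  have t₂ : G.dist v y ≤ G.dist v x + G.dist x y := hG.dist_triangle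
  rw [Below] at *
  omega

lemma below_child_trans (hG : G.IsTree) {v w u : V} (hw : w ∈ children G r v)
    (h : Below G r w u) : Below G r v u :=
  below_trans hG.isConnected (below_child hG hw) h

lemma below_walk (hG : G.IsTree) {v w u : V} (hadj : G.Adj v w)
    (hdw : G.dist r w = G.dist r v + 1) (hbel : Below G r w u) :
    ∃ q : G.Walk v u, q.IsPath ∧ q.getVert 1 = w := by
  obtain ⟨q, hql⟩ := (hG.isConnected w u).exists_walk_length_eq_dist
  have hdvw : G.dist v w = 1 := SimpleGraph.dist_eq_one_iff_adj.mpr hadj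
  have t₁ : G.dist v u ≤ G.dist v w + G.dist w u := hG.isConnected.dist_triangle
  have t₂ : G.dist r u ≤ G.dist r v + G.dist v u := hG.isConnected.dist_triangle
  rw [Below] at hbel
  have hlen : (SimpleGraph.Walk.cons hadj q).length = G.dist v u := by
    simp only [SimpleGraph.Walk.length_cons]
    omega
  exact ⟨SimpleGraph.Walk.cons hadj q,
    SimpleGraph.Walk.isPath_of_length_eq_dist _ hlen, by
      simp [SimpleGraph.Walk.getVert_cons_succ]⟩

lemma below_disjoint (hG : G.IsTree) {v w₁ w₂ u : V} (hw₁ : w₁ ∈ children G r v)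
    (hw₂ : w₂ ∈ children G r v) (hne : w₁ ≠ w₂) (h₁ : Below G r w₁ u) (h₂ : Below G r w₂ u) :
    False := by
  rw [mem_children] at hw₁ hw₂
  obtain ⟨q₁, hp₁, hg₁⟩ := below_walk hG hw₁.1 hw₁.2 h₁
  obtain ⟨q₂, hp₂, hg₂⟩ := below_walk hG hw₂.1 hw₂.2 h₂
  have heq := path_unique hG hp₁ hp₂
  rw [heq] at hg₁
  exact hne (hg₁.symm.trans hg₂)

/-- The recursive weight function. -/
noncomputable def mu (G : SimpleGraph V) (hc : G.Connected) (r : V) : V → ℕ := fun v =>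
  if h : (children G r v).Nonempty then
    ((children G r v).attach.sum fun w => mu G hc r w.1) + 1
      - (children G r v).attach.inf' (by simpa using h) (fun w => mu G hc r w.1)
  else 0
termination_by v => Fintype.card V - G.dist r v
decreasing_by
  all_goals
  · have hw := (mem_children.mp w.2).2
    have hlt : G.dist r w.1 < Fintype.card V := dist_lt_card hc r w.1
    omega

lemma mu_empty (hc : G.Connected) {v : V} (h : ¬ (children G r v).Nonempty) :
    mu G hc r v = 0 := by
  rw [mu, dif_neg h]

lemma mu_spec (hc : G.Connected) {v : V} (h : (children G r v).Nonempty) :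
    ∃ w₀ ∈ children G r v, (∀ w ∈ children G r v, mu G hc r w₀ ≤ mu G hc r w) ∧
      mu G hc r v + mu G hc r w₀ = (∑ w ∈ children G r v, mu G hc r w) + 1 := by
  have ha : (children G r v).attach.Nonempty := by simpa using h
  obtain ⟨w₀, hw₀, he⟩ := Finset.exists_mem_eq_inf' (H := ha) (fun w => mu G hc r w.1)
  refine ⟨w₀.1, w₀.2, ?_, ?_⟩
  · intro w hw
    rw [← he]
    exact Finset.inf'_le _ (Finset.mem_attach _ ⟨w, hw⟩)
  · have hle : mu G hc r w₀.1 ≤ ∑ w ∈ children G r v, mu G hc r w :=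
      Finset.single_le_sum (f := mu G hc r) (fun _ _ => Nat.zero_le _) w₀.2
    rw [mu, dif_pos h, Finset.sum_attach (children G r v) (mu G hc r), ← he]
    omega

lemma mu_pos (hc : G.Connected) {v : V} (h : (children G r v).Nonempty) :
    1 ≤ mu G hc r v := by
  obtain ⟨w₀, hw₀, -, he⟩ := mu_spec hc h
  have hle : mu G hc r w₀ ≤ ∑ w ∈ children G r v, mu G hc r w :=
    Finset.single_le_sum (f := mu G hc r) (fun _ _ => Nat.zero_le _) hw₀
  omega

lemma reachable_induce_mono {S T : Set V} (hST : S ⊆ T) (h : (G.induce S).Connected)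
    {x y : V} (hx : x ∈ S) (hy : y ∈ S) :
    (G.induce T).Reachable ⟨x, hST hx⟩ ⟨y, hST hy⟩ := by
  have h2 := (h.preconnected ⟨x, hx⟩ ⟨y, hy⟩).map (G.induceHomOfLE hST).toHom
  exact h2

lemma induce_connected_of_reachable {S : Set V} {v : V} (hv : v ∈ S)
    (h : ∀ x (hx : x ∈ S), (G.induce S).Reachable ⟨x, hx⟩ ⟨v, hv⟩) :
    (G.induce S).Connected := by
  rw [SimpleGraph.connected_iff_exists_forall_reachable]
  exact ⟨⟨v, hv⟩, fun w => (h w.1 w.2).symm⟩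

lemma exists_core_below (hG : G.IsTree) : ∀ (k : ℕ) (v : V),
    Fintype.card V - G.dist r v ≤ k →
    ∃ X : Finset V,
      X.card = mu G hG.isConnected r v ∧
      (∀ x ∈ X, Below G r v x) ∧
      ((children G r v).Nonempty → v ∈ X ∧ (G.induce (X : Set V)).Connected) ∧
      (∀ x ∈ X, ∃ y, G.Adj x y ∧ Below G r x y ∧ y ∉ X) := by
  intro k
  induction k with
  | zero =>
    intro v hv
    have := dist_lt_card hG.isConnected r v
    omega
  | succ k ih =>
    intro v hv
    set hc := hG.isConnected
    by_cases h : (children G r v).Nonempty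
    · obtain ⟨w₀, hw₀, hmin, hspec⟩ := mu_spec hc h
      have H : ∀ w : V, ∃ X : Finset V, Fintype.card V - G.dist r w ≤ k →
          (X.card = mu G hc r w ∧
           (∀ x ∈ X, Below G r w x) ∧
           ((children G r w).Nonempty → w ∈ X ∧ (G.induce (X : Set V)).Connected) ∧
           (∀ x ∈ X, ∃ y, G.Adj x y ∧ Below G r x y ∧ y ∉ X)) := by
        intro w
        by_cases hw : Fintype.card V - G.dist r w ≤ k
        · obtain ⟨X, hX⟩ := ih w hw
          exact ⟨X, fun _ => hX⟩
        · exact ⟨∅, fun hk => absurd hk hw⟩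
      choose F hF using H
      have hch : ∀ w ∈ children G r v, Fintype.card V - G.dist r w ≤ k := by
        intro w hw
        have := (mem_children.mp hw).2
        omega
      have hprops := fun w (hw : w ∈ children G r v) => hF w (hch w hw)
      -- facts about F w for children w
      have hFbelow : ∀ w ∈ children G r v, ∀ x ∈ F w, Below G r v x := fun w hw x hx =>
        below_child_trans hG hw ((hprops w hw).2.1 x hx)
      have hFd : ∀ w ∈ children G r v, ∀ x ∈ F w, G.dist r v + 1 ≤ G.dist r x := by
        intro w hw x hx
        have h1 := below_dist_le ((hprops w hw).2.1 x hx)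
        have h2 := (mem_children.mp hw).2
        omega
      set X : Finset V := insert v (((children G r v).erase w₀).biUnion F) with hX
      have hvnot : v ∉ ((children G r v).erase w₀).biUnion F := by
        intro hv'
        obtain ⟨w, hw, hvw⟩ := Finset.mem_biUnion.mp hv'
        have := hFd w (Finset.mem_of_mem_erase hw) v hvw
        omega
      have hdisj : ∀ w₁ ∈ (children G r v).erase w₀, ∀ w₂ ∈ (children G r v).erase w₀,
          w₁ ≠ w₂ → Disjoint (F w₁) (F w₂) := by
        intro w₁ hw₁ w₂ hw₂ hne
        rw [Finset.disjoint_left]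
        intro a ha₁ ha₂
        exact below_disjoint hG (Finset.mem_of_mem_erase hw₁) (Finset.mem_of_mem_erase hw₂) hne
          ((hprops w₁ (Finset.mem_of_mem_erase hw₁)).2.1 a ha₁)
          ((hprops w₂ (Finset.mem_of_mem_erase hw₂)).2.1 a ha₂)
      -- membership in X decomposition
      have hmemX : ∀ x, x ∈ X ↔ x = v ∨ ∃ w ∈ (children G r v).erase w₀, x ∈ F w := by
        intro x
        simp [hX, Finset.mem_insert, Finset.mem_biUnion]
      refine ⟨X, ?_, ?_, ?_, ?_⟩
      · -- cardinality
        rw [hX, Finset.card_insert_of_notMem hvnot, Finset.card_biUnion hdisj]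
        have hsum : ∑ w ∈ (children G r v).erase w₀, (F w).card
            = ∑ w ∈ (children G r v).erase w₀, mu G hc r w := by
          apply Finset.sum_congr rfl
          intro w hw
          exact (hprops w (Finset.mem_of_mem_erase hw)).1
        rw [hsum]
        have := Finset.sum_erase_add (children G r v) (mu G hc r) hw₀
        omega
      · -- below
        intro x hx
        rcases (hmemX x).mp hx with rfl | ⟨w, hw, hxw⟩
        · exact below_self x
        · exact hFbelow w (Finset.mem_of_mem_erase hw) x hxw
      · -- connectivity
        intro _
        have hvX : v ∈ X := Finset.mem_insert_self _ _
        refine ⟨hvX, ?_⟩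
        apply induce_connected_of_reachable (v := v) (by exact_mod_cast hvX)
        intro x hx
        have hx' : x ∈ X := by exact_mod_cast hx
        rcases (hmemX x).mp hx' with rfl | ⟨w, hw, hxw⟩
        · rfl
        · have hwch := Finset.mem_of_mem_erase hw
          have hFne : (children G r w).Nonempty := by
            by_contra hemp
            have h0 := mu_empty hc hemp
            have hcard := (hprops w hwch).1
            rw [h0] at hcard
            have := Finset.card_eq_zero.mp hcard
            rw [this] at hxw
            simp at hxw
          obtain ⟨hwF, hFconn⟩ := (hprops w hwch).2.2.1 hFne
          have hsub : (↑(F w) : Set V) ⊆ (↑X : Set V) := by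
            intro a ha
            have : a ∈ F w := by exact_mod_cast ha
            exact_mod_cast (hmemX a).mpr (Or.inr ⟨w, hw, this⟩)
          have r1 : (G.induce (↑X : Set V)).Reachable ⟨x, hx⟩ ⟨w, hsub (by exact_mod_cast hwF)⟩ :=
            reachable_induce_mono hsub hFconn (by exact_mod_cast hxw) (by exact_mod_cast hwF)
          have r2 : (G.induce (↑X : Set V)).Adj ⟨w, hsub (by exact_mod_cast hwF)⟩
              ⟨v, by exact_mod_cast hvX⟩ := by
            simp only [SimpleGraph.comap_adj, Function.Embedding.coe_subtype]
            exact ((mem_children.mp hwch).1).symm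
          exact r1.trans r2.reachable
      · -- witnesses
        intro x hx
        rcases (hmemX x).mp hx with rfl | ⟨w, hw, hxw⟩
        · refine ⟨w₀, (mem_children.mp hw₀).1, below_child hG hw₀, ?_⟩
          intro hw₀X
          rcases (hmemX w₀).mp hw₀X with he | ⟨w, hw, hw₀w⟩
          · have := (mem_children.mp hw₀).2
            rw [he] at this
            omega
          · exact below_disjoint hG (Finset.mem_of_mem_erase hw) hw₀
              (Finset.ne_of_mem_erase hw) (hFbelow w (Finset.mem_of_mem_erase hw) w₀ hw₀w
                |> fun _ => (hprops w (Finset.mem_of_mem_erase hw)).2.1 w₀ hw₀w)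
              (below_self w₀)
        · have hwch := Finset.mem_of_mem_erase hw
          obtain ⟨y, hyadj, hybel, hynot⟩ := (hprops w hwch).2.2.2 x hxw
          refine ⟨y, hyadj, hybel, ?_⟩
          intro hyX
          have hby : Below G r w y :=
            below_trans hG.isConnected ((hprops w hwch).2.1 x hxw) hybel
          rcases (hmemX y).mp hyX with rfl | ⟨w', hw', hyw'⟩
          · have := below_dist_le hby
            have := (mem_children.mp hwch).2
            omega
          · by_cases hww' : w' = w
            · rw [hww'] at hyw'
              exact hynot hyw'
            · exact below_disjoint hG (Finset.mem_of_mem_erase hw') hwch hww'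
                ((hprops w' (Finset.mem_of_mem_erase hw')).2.1 y hyw') hby
    · refine ⟨∅, ?_, by simp, fun hne => absurd hne h, by simp⟩
      simp [mu_empty hc h]

variable {c : ℕ}

lemma core_bound (hG : G.IsTree) (hcore : ∀ X : Finset V, IsTreeCore G X → X.card ≤ c)
    {v : V} {s : Finset V} (hs : s ⊆ children G r v) {y₀ : V} (hadj : G.Adj v y₀)
    (hy₀ : ∀ w ∈ s, ¬ Below G r w y₀) (hy₀v : y₀ ≠ v) :
    1 + ∑ w ∈ s, mu G hG.isConnected r w ≤ c := by
  set hc := hG.isConnected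
  have H : ∀ w : V, ∃ X : Finset V,
      (X.card = mu G hc r w ∧
       (∀ x ∈ X, Below G r w x) ∧
       ((children G r w).Nonempty → w ∈ X ∧ (G.induce (X : Set V)).Connected) ∧
       (∀ x ∈ X, ∃ y, G.Adj x y ∧ Below G r x y ∧ y ∉ X)) :=
    fun w => exists_core_below hG (Fintype.card V) w (by omega)
  choose F hprops using H
  have hFd : ∀ w ∈ s, ∀ x ∈ F w, G.dist r v + 1 ≤ G.dist r x := by
    intro w hw x hx
    have h1 := below_dist_le ((hprops w).2.1 x hx)
    have h2 := (mem_children.mp (hs hw)).2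
    omega
  set Y : Finset V := insert v (s.biUnion F) with hY
  have hvnot : v ∉ s.biUnion F := by
    intro hv'
    obtain ⟨w, hw, hvw⟩ := Finset.mem_biUnion.mp hv'
    have := hFd w hw v hvw
    omega
  have hdisj : ∀ w₁ ∈ s, ∀ w₂ ∈ s, w₁ ≠ w₂ → Disjoint (F w₁) (F w₂) := by
    intro w₁ hw₁ w₂ hw₂ hne
    rw [Finset.disjoint_left]
    intro a ha₁ ha₂
    exact below_disjoint hG (hs hw₁) (hs hw₂) hne
      ((hprops w₁).2.1 a ha₁) ((hprops w₂).2.1 a ha₂)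
  have hmemY : ∀ x, x ∈ Y ↔ x = v ∨ ∃ w ∈ s, x ∈ F w := by
    intro x
    simp [hY, Finset.mem_insert, Finset.mem_biUnion]
  have hvY : v ∈ Y := Finset.mem_insert_self _ _
  have hcard : Y.card = 1 + ∑ w ∈ s, mu G hc r w := by
    rw [hY, Finset.card_insert_of_notMem hvnot, Finset.card_biUnion hdisj]
    rw [Finset.sum_congr rfl (fun w _ => (hprops w).1)]
    exact Nat.add_comm _ _
  rw [← hcard]
  apply hcore
  constructor
  · -- connectivity
    apply induce_connected_of_reachable (v := v) (by exact_mod_cast hvY)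
    intro x hx
    have hx' : x ∈ Y := by exact_mod_cast hx
    rcases (hmemY x).mp hx' with rfl | ⟨w, hw, hxw⟩
    · rfl
    · have hFne : (children G r w).Nonempty := by
        by_contra hemp
        have h0 := mu_empty hc hemp
        have hcard2 := (hprops w).1
        rw [h0] at hcard2
        rw [Finset.card_eq_zero.mp hcard2] at hxw
        simp at hxw
      obtain ⟨hwF, hFconn⟩ := (hprops w).2.2.1 hFne
      have hsub : (↑(F w) : Set V) ⊆ (↑Y : Set V) := by
        intro a ha
        have : a ∈ F w := by exact_mod_cast ha
        exact_mod_cast (hmemY a).mpr (Or.inr ⟨w, hw, this⟩)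
      have r1 : (G.induce (↑Y : Set V)).Reachable ⟨x, hx⟩ ⟨w, hsub (by exact_mod_cast hwF)⟩ :=
        reachable_induce_mono hsub hFconn (by exact_mod_cast hxw) (by exact_mod_cast hwF)
      have r2 : (G.induce (↑Y : Set V)).Adj ⟨w, hsub (by exact_mod_cast hwF)⟩
          ⟨v, by exact_mod_cast hvY⟩ := by
        simp only [SimpleGraph.comap_adj, Function.Embedding.coe_subtype]
        exact ((mem_children.mp (hs hw)).1).symm
      exact r1.trans r2.reachable
  · -- outside neighbours
    intro x hx
    rcases (hmemY x).mp hx with rfl | ⟨w, hw, hxw⟩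
    · refine ⟨y₀, ?_, hadj⟩
      intro hy₀Y
      rcases (hmemY y₀).mp hy₀Y with he | ⟨w, hw, hy₀w⟩
      · exact hy₀v he
      · exact hy₀ w hw ((hprops w).2.1 y₀ hy₀w)
    · obtain ⟨y, hyadj, hybel, hynot⟩ := (hprops w).2.2.2 x hxw
      refine ⟨y, ?_, hyadj⟩
      intro hyY
      have hby : Below G r w y :=
        below_trans hG.isConnected ((hprops w).2.1 x hxw) hybel
      rcases (hmemY y).mp hyY with rfl | ⟨w', hw', hyw'⟩
      · have := below_dist_le hby
        have := (mem_children.mp (hs hw)).2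
        omega
      · by_cases hww' : w' = w
        · rw [hww'] at hyw'
          exact hynot hyw'
        · exact below_disjoint hG (hs hw') (hs hw) hww'
            ((hprops w').2.1 y hyw') hby

lemma mu_le (hG : G.IsTree) (hcore : ∀ X : Finset V, IsTreeCore G X → X.card ≤ c)
    (hc1 : 1 ≤ c) (v : V) : mu G hG.isConnected r v ≤ c := by
  set hc := hG.isConnected
  by_cases h : (children G r v).Nonempty
  · obtain ⟨w₀, hw₀, hmin, hspec⟩ := mu_spec hc h
    have hd₀ := (mem_children.mp hw₀).2
    have hb := core_bound (r := r) hG hcore (Finset.erase_subset w₀ (children G r v))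
      (mem_children.mp hw₀).1
      (fun w hw hbel => below_disjoint hG (Finset.mem_of_mem_erase hw) hw₀
        (Finset.ne_of_mem_erase hw) hbel (below_self w₀))
      (fun he => by rw [he] at hd₀; omega)
    have := Finset.sum_erase_add (children G r v) (mu G hc r) hw₀
    omega
  · rw [mu_empty hc h]
    omega

lemma sum_children_le (hG : G.IsTree) (hcore : ∀ X : Finset V, IsTreeCore G X → X.card ≤ c)
    {v : V} (hv : v ≠ r) :
    1 + ∑ w ∈ children G r v, mu G hG.isConnected r w ≤ c := by
  obtain ⟨p, hadj, hdp⟩ := exists_parent (r := r) hG hv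
  have := core_bound (r := r) hG hcore (le_refl (children G r v)) hadj
    (fun w hw hbel => by
      have h1 := below_dist_le hbel
      have h2 := (mem_children.mp hw).2
      omega)
    (fun he => by rw [he] at hdp; omega)
  exact this

/-- The weight sent from `v` towards its neighbour `u`. -/
noncomputable def wt (G : SimpleGraph V) (hc : G.Connected) (r : V) (c : ℕ) (v u : V) : ℕ :=
  if G.dist r u = G.dist r v + 1 then c - mu G hc r u else mu G hc r v

lemma wt_le (hG : G.IsTree) (hcore : ∀ X : Finset V, IsTreeCore G X → X.card ≤ c)
    (hc1 : 1 ≤ c) (v u : V) : wt G hG.isConnected r c v u ≤ c := by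
  rw [wt]
  split
  · omega
  · exact mu_le hG hcore hc1 v

lemma wt_sum (hG : G.IsTree) (hcore : ∀ X : Finset V, IsTreeCore G X → X.card ≤ c)
    (hc1 : 1 ≤ c) {u v : V} (h : G.Adj u v) :
    wt G hG.isConnected r c u v + wt G hG.isConnected r c v u = c := by
  rcases adj_dist (r := r) hG h with hd | hd
  · rw [wt, wt, if_pos hd, if_neg (by omega)]
    have := mu_le (r := r) hG hcore hc1 v
    omega
  · rw [wt, wt, if_neg (by omega), if_pos hd]
    have := mu_le (r := r) hG hcore hc1 u
    omega

lemma exists_neighbor (hc : G.Connected) (hV : 2 ≤ Fintype.card V) (x : V) :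
    ∃ u, G.Adj x u := by
  obtain ⟨y, hy⟩ := Fintype.exists_ne_of_one_lt_card (by omega) x
  have hd : 0 < G.dist x y := hc.pos_dist_of_ne (Ne.symm hy)
  obtain ⟨p, hl⟩ := (hc x y).exists_walk_length_eq_dist
  have := p.adj_getVert_succ (i := 0) (by omega)
  exact ⟨_, by simpa using this⟩

lemma nbrs_root (hG : G.IsTree) :
    G.neighborFinset r = children G r r := by
  ext u
  rw [SimpleGraph.mem_neighborFinset, mem_children]
  constructor
  · intro h
    refine ⟨h, ?_⟩
    rcases adj_dist (r := r) hG h with hd | hd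
    · rw [SimpleGraph.dist_self] at hd ⊢
      omega
    · rw [SimpleGraph.dist_self] at hd
      omega
  · exact fun h => h.1

lemma nbrs_split (hG : G.IsTree) {v p : V} (hadj : G.Adj v p)
    (hdp : G.dist r p + 1 = G.dist r v) :
    G.neighborFinset v = insert p (children G r v) := by
  ext u
  rw [SimpleGraph.mem_neighborFinset, Finset.mem_insert, mem_children]
  constructor
  · intro h
    rcases adj_dist (r := r) hG h with hd | hd
    · exact Or.inr ⟨h, hd⟩
    · exact Or.inl (parent_unique (r := r) hG h hadj (by omega) hdp)
  · rintro (rfl | h)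
    · exact hadj
    · exact h.1

lemma vertex_bound (hG : G.IsTree) (hcore : ∀ X : Finset V, IsTreeCore G X → X.card ≤ c)
    (hc1 : 1 ≤ c) (hV : 2 ≤ Fintype.card V) (x : V) :
    (G.neighborFinset x).sup (wt G hG.isConnected r c x)
      + ∑ u ∈ G.neighborFinset x, wt G hG.isConnected r c u x ≤ 2 * c - 1 := by
  set hc := hG.isConnected
  by_cases hx : x = r
  · subst hx
    rw [nbrs_root hG]
    have hne : (children G x x).Nonempty := by
      obtain ⟨u, hu⟩ := exists_neighbor hc hV x
      exact ⟨u, by rw [← nbrs_root hG, SimpleGraph.mem_neighborFinset]; exact hu⟩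
    obtain ⟨w₀, hw₀, hmin, hspec⟩ := mu_spec hc hne
    have hsup : (children G x x).sup (wt G hc x c x) ≤ c - mu G hc x w₀ := by
      apply Finset.sup_le
      intro u hu
      rw [wt, if_pos (mem_children.mp hu).2]
      exact Nat.sub_le_sub_left (hmin u hu) c
    have hsum : ∑ u ∈ children G x x, wt G hc x c u x
        = ∑ u ∈ children G x x, mu G hc x u := by
      apply Finset.sum_congr rfl
      intro u hu
      have := (mem_children.mp hu).2
      rw [wt, if_neg (by omega)]
    rw [hsum]
    have hmuv := mu_le (r := x) hG hcore hc1 x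
    have hw₀sum : mu G hc x w₀ ≤ ∑ w ∈ children G x x, mu G hc x w :=
      Finset.single_le_sum (f := mu G hc x) (fun _ _ => Nat.zero_le _) hw₀
    have hw₀le := mu_le (r := x) hG hcore hc1 w₀
    omega
  · obtain ⟨p, hadj, hdp⟩ := exists_parent (r := r) hG hx
    rw [nbrs_split (r := r) hG hadj hdp]
    have hpnotch : p ∉ children G r x := by
      intro hp
      have := (mem_children.mp hp).2
      omega
    rw [Finset.sup_insert, Finset.sum_insert hpnotch]
    have hwxp : wt G hc r c x p = mu G hc r x := by
      rw [wt, if_neg (by omega)]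
    have hwpx : wt G hc r c p x = c - mu G hc r x := by
      rw [wt, if_pos (by omega)]
    have hsum : ∑ u ∈ children G r x, wt G hc r c u x
        = ∑ u ∈ children G r x, mu G hc r u := by
      apply Finset.sum_congr rfl
      intro u hu
      have := (mem_children.mp hu).2
      rw [wt, if_neg (by omega)]
    rw [hwxp, hwpx, hsum]
    have hmux := mu_le (r := r) hG hcore hc1 x
    have hchsum := sum_children_le (r := r) hG hcore hx
    by_cases hne : (children G r x).Nonempty
    · obtain ⟨w₀, hw₀, hmin, hspec⟩ := mu_spec hc hne
      have hsup : (children G r x).sup (wt G hc r c x) ≤ c - mu G hc r w₀ := by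
        apply Finset.sup_le
        intro u hu
        rw [wt, if_pos (mem_children.mp hu).2]
        exact Nat.sub_le_sub_left (hmin u hu) c
      have hw₀sum : mu G hc r w₀ ≤ ∑ w ∈ children G r x, mu G hc r w :=
        Finset.single_le_sum (f := mu G hc r) (fun _ _ => Nat.zero_le _) hw₀
      have hmax : mu G hc r x ⊔ (children G r x).sup (wt G hc r c x)
          ≤ max (mu G hc r x) (c - mu G hc r w₀) := max_le_max le_rfl hsup
      have hw₀le := mu_le (r := r) hG hcore hc1 w₀
      rcases max_cases (mu G hc r x) (c - mu G hc r w₀) with ⟨he, -⟩ | ⟨he, -⟩ <;>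
        rw [he] at hmax <;> omega
    · rw [Finset.not_nonempty_iff_eq_empty] at hne
      have h0 : mu G hc r x = 0 := mu_empty hc (by simp [hne])
      have hz : mu G hc r x ⊔ (∅ : Finset V).sup (wt G hc r c x) = 0 := by
        simp [h0]
      rw [hne, hz]
      simp only [Finset.sum_empty, h0]
      omega

lemma count_ite (c k : ℕ) : ∑ t ∈ Finset.range c, (if t < k then 1 else 0) = min c k := by
  induction c with
  | zero => simp
  | succ n ih =>
    rw [Finset.sum_range_succ, ih]
    split <;> omega

end StarPackAux

open StarPackAux

/-- in a tree with at least 2 vertices in which every core has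
size at most `c`, there is an (integer) star packing covering every edge
exactly `c` times and every vertex at most `2c - 1` times. -/
theorem exists_star_packing {V : Type*} [Fintype V] (G : SimpleGraph V)
    (hG : G.IsTree) (hV : 2 ≤ Fintype.card V) (c : ℕ) (hc : 1 ≤ c)
    (hcore : ∀ X : Finset V, IsTreeCore G X → X.card ≤ c) :
    ∃ (n : ℕ) (st : Fin n → GraphStar G) (m : Fin n → ℕ),
      (∀ i, 0 < m i) ∧
      (∀ u v, G.Adj u v → ∑ i, (if (st i).memE u v then m i else 0) = c) ∧
      (∀ x : V, ∑ i, (if (st i).memV x then m i else 0) ≤ 2 * c - 1) := by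
  classical
  have hne : Nonempty V := Fintype.card_pos_iff.mp (by omega)
  obtain ⟨r⟩ := hne
  have hcn : G.Connected := hG.isConnected
  set w : V → V → ℕ := wt G hG.isConnected r c with hw
  have hwle : ∀ v u, w v u ≤ c := wt_le hG hcore hc
  -- the nested leaf-sets
  set L : V × Fin c → Finset V :=
    fun p => (G.neighborFinset p.1).filter (fun u => p.2.1 + 1 ≤ w p.1 u) with hL
  have hmemL : ∀ (p : V × Fin c) (u : V), u ∈ L p ↔ G.Adj p.1 u ∧ p.2.1 + 1 ≤ w p.1 u := by
    intro p u
    simp [hL, Finset.mem_filter, SimpleGraph.mem_neighborFinset]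
  set I : Finset (V × Fin c) := Finset.univ.filter (fun p => (L p).Nonempty) with hI
  -- a junk star
  obtain ⟨u₀, hu₀⟩ := exists_neighbor hcn hV r
  set junk : GraphStar G :=
    ⟨r, {u₀}, ⟨u₀, Finset.mem_singleton_self u₀⟩, fun u hu => by
      rw [Finset.mem_singleton] at hu; rw [hu]; exact hu₀⟩ with hjunk
  set S : V × Fin c → GraphStar G := fun p =>
    if h : (L p).Nonempty then
      ⟨p.1, L p, h, fun u hu => ((hmemL p u).mp hu).1⟩
    else junk
    with hS
  have hScenter : ∀ p, (L p).Nonempty → (S p).center = p.1 ∧ (S p).leaves = L p := by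
    intro p h
    simp [hS, dif_pos h]
  set n := Fintype.card ↥I with hn
  set e : ↥I ≃ Fin n := Fintype.equivFin ↥I with he
  have hconv : ∀ F : V × Fin c → ℕ, (∑ i : Fin n, F (e.symm i).1) = ∑ p ∈ I, F p := by
    intro F
    rw [Equiv.sum_comp e.symm (fun q : ↥I => F q.1)]
    exact Finset.sum_coe_sort I F
  have hsum_fin : ∀ k : ℕ, k ≤ c → ∑ t : Fin c, (if t.1 < k then 1 else 0) = k := by
    intro k hk
    rw [Fin.sum_univ_eq_sum_range (fun t => if t < k then 1 else 0) c, count_ite]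
    omega
  refine ⟨n, fun i => S (e.symm i).1, fun _ => 1, fun _ => Nat.one_pos, ?_, ?_⟩
  · -- edge coverage
    intro u v huv
    rw [hconv (fun p => if (S p).memE u v then 1 else 0), hI, Finset.sum_filter]
    have key : ∀ p : V × Fin c,
        (if (L p).Nonempty then (if (S p).memE u v then 1 else 0) else 0)
          = (if (p.1 = u ∧ v ∈ L p) then 1 else 0)
            + (if (p.1 = v ∧ u ∈ L p) then 1 else 0) := by
      intro p
      by_cases h : (L p).Nonempty
      · rw [if_pos h]
        obtain ⟨hc₁, hl₁⟩ := hScenter p h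
        have hE : (S p).memE u v ↔ (u = p.1 ∧ v ∈ L p) ∨ (v = p.1 ∧ u ∈ L p) := by
          rw [GraphStar.memE, hc₁, hl₁]
        by_cases hA : p.1 = u ∧ v ∈ L p <;> by_cases hB : p.1 = v ∧ u ∈ L p
        · exact absurd (hA.1.symm.trans hB.1) huv.ne
        · rw [if_pos (hE.mpr (Or.inl ⟨hA.1.symm, hA.2⟩)), if_pos hA, if_neg hB]
        · rw [if_pos (hE.mpr (Or.inr ⟨hB.1.symm, hB.2⟩)), if_neg hA, if_pos hB]
        · rw [if_neg, if_neg hA, if_neg hB]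
          rw [hE]
          rintro (⟨h1, h2⟩ | ⟨h1, h2⟩)
          · exact hA ⟨h1.symm, h2⟩
          · exact hB ⟨h1.symm, h2⟩
      · rw [if_neg h, Finset.not_nonempty_iff_eq_empty.mp h]
        simp
    rw [Finset.sum_congr rfl (fun p _ => key p), Finset.sum_add_distrib]
    have part : ∀ z z' : V, G.Adj z z' → ∑ p : V × Fin c,
        (if (p.1 = z ∧ z' ∈ L p) then 1 else 0) = w z z' := by
      intro z z' hzz'
      rw [Fintype.sum_prod_type]
      rw [Finset.sum_eq_single z
        (fun b _ hb => Finset.sum_eq_zero (fun t _ => if_neg (fun hh => hb hh.1)))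
        (fun hz => absurd (Finset.mem_univ z) hz)]
      have : ∀ t : Fin c, ((z, t).1 = z ∧ z' ∈ L (z, t)) ↔ t.1 < w z z' := by
        intro t
        rw [hmemL]
        exact ⟨fun h => h.2.2, fun h => ⟨rfl, hzz', h⟩⟩
      rw [Finset.sum_congr rfl (fun t _ => by rw [if_congr (this t) rfl rfl])]
      exact hsum_fin _ (hwle z z')
    rw [part u v huv, part v u huv.symm]
    exact wt_sum hG hcore hc huv
  · -- vertex coverage
    intro x
    rw [hconv (fun p => if (S p).memV x then 1 else 0), hI, Finset.sum_filter]
    have key : ∀ p : V × Fin c,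
        (if (L p).Nonempty then (if (S p).memV x then 1 else 0) else 0)
          = (if (p.1 = x ∧ (L p).Nonempty) then 1 else 0)
            + (if x ∈ L p then 1 else 0) := by
      intro p
      by_cases h : (L p).Nonempty
      · rw [if_pos h]
        obtain ⟨hc₁, hl₁⟩ := hScenter p h
        have hE : (S p).memV x ↔ x = p.1 ∨ x ∈ L p := by
          rw [GraphStar.memV, hc₁, hl₁]
        have hexcl : x ∈ L p → p.1 ≠ x := fun hx => ((hmemL p x).mp hx).1.ne
        by_cases hA : p.1 = x <;> by_cases hB : x ∈ L p
        · exact absurd hA (hexcl hB)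
        · rw [if_pos (hE.mpr (Or.inl hA.symm)), if_pos ⟨hA, h⟩, if_neg hB]
        · rw [if_pos (hE.mpr (Or.inr hB)), if_neg (fun hh => hA hh.1), if_pos hB]
        · rw [if_neg, if_neg (fun hh => hA hh.1), if_neg hB]
          rw [hE]
          rintro (h1 | h1)
          · exact hA h1.symm
          · exact hB h1
      · rw [if_neg h, if_neg (fun hh => h hh.2),
          if_neg (fun hx => h ⟨x, hx⟩)]
    rw [Finset.sum_congr rfl (fun p _ => key p), Finset.sum_add_distrib]
    have part2 : ∑ p : V × Fin c, (if x ∈ L p then 1 else 0)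
        = ∑ u ∈ G.neighborFinset x, w u x := by
      rw [Fintype.sum_prod_type]
      have hrow : ∀ a : V, ∑ t : Fin c, (if x ∈ L (a, t) then 1 else 0)
          = if a ∈ G.neighborFinset x then w a x else 0 := by
        intro a
        by_cases hadj : G.Adj a x
        · rw [if_pos (by rwa [SimpleGraph.mem_neighborFinset, SimpleGraph.adj_comm])]
          have : ∀ t : Fin c, (x ∈ L (a, t)) ↔ t.1 < w a x := by
            intro t
            rw [hmemL]
            exact ⟨fun h => h.2, fun h => ⟨hadj, h⟩⟩
          rw [Finset.sum_congr rfl (fun t _ => by rw [if_congr (this t) rfl rfl])]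
          exact hsum_fin _ (hwle a x)
        · rw [if_neg (by rwa [SimpleGraph.mem_neighborFinset, SimpleGraph.adj_comm])]
          apply Finset.sum_eq_zero
          intro t _
          rw [if_neg (fun hx => hadj ((hmemL (a, t) x).mp hx).1)]
      rw [Finset.sum_congr rfl (fun a _ => hrow a)]
      rw [Finset.sum_ite_mem Finset.univ (G.neighborFinset x) (fun a => w a x),
        Finset.univ_inter]
    have part1 : ∑ p : V × Fin c, (if (p.1 = x ∧ (L p).Nonempty) then 1 else 0)
        = (G.neighborFinset x).sup (w x) := by
      rw [Fintype.sum_prod_type]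
      rw [Finset.sum_eq_single x
        (fun b _ hb => Finset.sum_eq_zero (fun t _ => if_neg (fun hh => hb hh.1)))
        (fun hz => absurd (Finset.mem_univ x) hz)]
      have : ∀ t : Fin c, (((x, t) : V × Fin c).1 = x ∧ (L (x, t)).Nonempty)
          ↔ t.1 < (G.neighborFinset x).sup (w x) := by
        intro t
        rw [Finset.lt_sup_iff]
        constructor
        · rintro ⟨-, u, hu⟩
          rw [hmemL] at hu
          obtain ⟨hu1, hu2⟩ := hu
          refine ⟨u, ?_, ?_⟩
          · rw [SimpleGraph.mem_neighborFinset]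
            exact hu1
          · simp only at hu2 ⊢
            omega
        · rintro ⟨u, hu, hlt⟩
          rw [SimpleGraph.mem_neighborFinset] at hu
          refine ⟨rfl, u, ?_⟩
          rw [hmemL]
          refine ⟨hu, ?_⟩
          simp only
          omega
      rw [Finset.sum_congr rfl (fun t _ => by rw [if_congr (this t) rfl rfl])]
      apply hsum_fin
      apply Finset.sup_le
      intro u _
      exact hwle x u
    rw [part1, part2]
    exact vertex_bound hG hcore hc hV x
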